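/- Let w be a nonzero complex number, set U = w², let s > 0 be real, and let κ, κ₂, g be complex numbers. Define κ̂₁ = w·κ + κ₂/w, κ̂₂ = w·κ₂ and ĝ = w·g. Then |κ̂₁ − (2·Re(U)/(|U|² + s²))·κ̂₂ + ĝ/s²|² ≥ |U|·|κ + g/s²|² + (|U² − s²|²/(|U|² + s²)²)·|κ₂|²/|U| − 2·(|U² − s²|/(|U|² + s²))·|κ₂|·|κ + g/s²|. -/

import Mathlib

set_option autoImplicit false

theorem pointwise_estimate_E2
    (w U : ℂ) (hw : w ≠ 0) (hU : U = w ^ 2) (s : ℝ) (hs : 0 < s) (κ κ₂ g : ℂ) :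
    ‖U‖ * ‖κ + g / (s : ℂ) ^ 2‖ ^ 2
      + (‖U ^ 2 - (s : ℂ) ^ 2‖ ^ 2 / (‖U‖ ^ 2 + s ^ 2) ^ 2)
          * ‖κ₂‖ ^ 2 / ‖U‖
      - 2 * (‖U ^ 2 - (s : ℂ) ^ 2‖ / (‖U‖ ^ 2 + s ^ 2))
          * ‖κ₂‖ * ‖κ + g / (s : ℂ) ^ 2‖
    ≤ ‖(w * κ + κ₂ / w)
        - ((2 * U.re / (‖U‖ ^ 2 + s ^ 2) : ℝ) : ℂ) * (w * κ₂)
        + (w * g) / (s : ℂ) ^ 2‖ ^ 2 := by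
  have hs0 : (s : ℂ) ≠ 0 := by exact_mod_cast hs.ne'
  set d : ℝ := ‖U‖ ^ 2 + s ^ 2 with hdf
  have hd : (0:ℝ) < d := by positivity
  have hdc : (d : ℂ) ≠ 0 := by exact_mod_cast hd.ne'
  set A : ℂ := κ + g / (s : ℂ) ^ 2 with hA
  -- algebraic identity
  have h1 : (d : ℂ) = U * (starRingEnd ℂ) U + (s : ℂ) ^ 2 := by
    rw [Complex.mul_conj, hdf, ← Complex.sq_norm]
    push_cast
    ring
  have h2 : ((2 * U.re : ℝ) : ℂ) = U + (starRingEnd ℂ) U := by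
    rw [Complex.add_conj]
  have key : (w * κ + κ₂ / w)
        - ((2 * U.re / d : ℝ) : ℂ) * (w * κ₂)
        + (w * g) / (s : ℂ) ^ 2
      = w * A - (κ₂ / w) * ((U ^ 2 - (s : ℂ) ^ 2) / (d : ℂ)) := by
    have hc : ((2 * U.re / d : ℝ) : ℂ) = ((2 * U.re : ℝ) : ℂ) / (d : ℂ) := by
      push_cast; ring
    rw [hc, h2, hA]
    field_simp
    rw [hU] at h1 ⊢
    rw [h1]
    ring
  rw [key]
  set x : ℂ := w * A
  set y : ℂ := (κ₂ / w) * ((U ^ 2 - (s : ℂ) ^ 2) / (d : ℂ))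
  have hsub : (‖x‖ - ‖y‖) ^ 2 ≤ ‖x - y‖ ^ 2 := by
    have h := abs_norm_sub_norm_le x y
    have h' := abs_le.mp h
    exact sq_le_sq' (by linarith [h'.1]) h'.2
  have hax : ‖x‖ = ‖w‖ * ‖A‖ := norm_mul _ _
  have hay : ‖y‖
      = ‖κ₂‖ / ‖w‖ * (‖U ^ 2 - (s : ℂ) ^ 2‖ / d) := by
    simp [y, norm_div, norm_mul, Complex.norm_real, Real.norm_eq_abs, abs_of_pos hd]
  have haw : (0:ℝ) < ‖w‖ := norm_pos_iff.mpr hw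
  have haU : ‖U‖ = ‖w‖ ^ 2 := by rw [hU, norm_pow]
  refine le_trans (le_of_eq ?_) hsub
  rw [hax, hay, haU]
  field_simp
  ring
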